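/- With N_l = ⌈ε^{-2} 2^{-(3/2)l}⌉ samples on level l, per-sample model cost c_m 2^{γ l} with γ = 1, and L = ⌈log(ε^{-1})/log 2⌉ levels, the total forward model cost ∑_{l=0}^L N_l c_m 2^l is O(ε^{-2}) as ε → 0. -/

import Mathlib

open Finset

lemma my_geom_sum_le {r : ℝ} (h0 : 0 ≤ r) (h1 : r < 1) (n : ℕ) :
    ∑ i ∈ Finset.range n, r ^ i ≤ (1 - r)⁻¹ := by
  rw [geom_sum_eq h1.ne n]
  rw [div_le_iff_of_neg (by linarith : r - 1 < 0)]
  have hpn : 0 ≤ r ^ n := pow_nonneg h0 n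
  have hne : (1:ℝ) - r ≠ 0 := (by linarith : (0:ℝ) < 1 - r).ne'
  have h : (1 - r)⁻¹ * (r - 1) = -1 := by
    field_simp
    ring
  linarith

theorem stmt16 (cm : ℝ) (hcm : 0 < cm) :
    ∃ C > 0, ∀ ε : ℝ, 0 < ε → ε < 1 →
      ∑ l ∈ Finset.range (⌈Real.log ε⁻¹ / Real.log 2⌉₊ + 1),
          (⌈ε ^ (-2 : ℤ) * (2 : ℝ) ^ (-(3 / 2 : ℝ) * (l : ℝ))⌉₊ : ℝ) *
            (cm * 2 ^ l) ≤
        C * ε ^ (-2 : ℤ) := by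
  refine ⟨cm * 8, by positivity, fun ε hε hε1 => ?_⟩
  set L := ⌈Real.log ε⁻¹ / Real.log 2⌉₊ with hL
  have hε2 : (0:ℝ) < ε ^ (-2:ℤ) := by positivity
  -- the geometric ratio r = 2^(-1/2)
  set r : ℝ := (2:ℝ) ^ (-(1/2:ℝ)) with hr
  have hr0 : 0 ≤ r := le_of_lt (Real.rpow_pos_of_pos two_pos _)
  have hrval : r = (Real.sqrt 2)⁻¹ := by
    rw [hr, Real.rpow_neg (by norm_num), ← Real.sqrt_eq_rpow]
  have hsqrt : (4/3 : ℝ) ≤ Real.sqrt 2 := by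
    rw [show (4/3:ℝ) = Real.sqrt ((4/3)^2) by
      rw [Real.sqrt_sq (by norm_num)]]
    exact Real.sqrt_le_sqrt (by norm_num)
  have hrle : r ≤ 3/4 := by
    rw [hrval]
    rw [inv_le_comm₀ (by positivity) (by norm_num)]
    linarith
  have hr1 : r < 1 := lt_of_le_of_lt hrle (by norm_num)
  -- step 1: bound each term
  have hterm : ∀ l ∈ Finset.range (L+1),
      (⌈ε ^ (-2 : ℤ) * (2 : ℝ) ^ (-(3 / 2 : ℝ) * (l : ℝ))⌉₊ : ℝ) * (cm * 2 ^ l)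
      ≤ (ε ^ (-2:ℤ) * (2:ℝ) ^ (-(3/2:ℝ) * (l:ℝ)) + 1) * (cm * 2 ^ l) := by
    intro l _
    have hx : (0:ℝ) ≤ ε ^ (-2 : ℤ) * (2 : ℝ) ^ (-(3 / 2 : ℝ) * (l : ℝ)) := by
      positivity
    have := (Nat.ceil_lt_add_one hx).le
    have hpos : (0:ℝ) ≤ cm * 2 ^ l := by positivity
    exact mul_le_mul_of_nonneg_right this hpos
  refine le_trans (Finset.sum_le_sum hterm) ?_
  -- rewrite the summand
  have hre : ∀ l : ℕ,
      (ε ^ (-2:ℤ) * (2:ℝ) ^ (-(3/2:ℝ) * (l:ℝ)) + 1) * (cm * 2 ^ l)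
      = cm * ε ^ (-2:ℤ) * r ^ l + cm * 2 ^ l := by
    intro l
    have h2 : (2:ℝ) ^ (-(3/2:ℝ) * (l:ℝ)) * 2 ^ l = r ^ l := by
      rw [hr, ← Real.rpow_natCast (2:ℝ) l, ← Real.rpow_add two_pos,
        ← Real.rpow_natCast ((2:ℝ) ^ (-(1/2:ℝ))) l,
        ← Real.rpow_mul (by norm_num : (0:ℝ) ≤ 2)]
      ring_nf
    linear_combination (cm * ε ^ (-2:ℤ)) * h2
  rw [Finset.sum_congr rfl (fun l _ => hre l), Finset.sum_add_distrib,
    ← Finset.mul_sum, ← Finset.mul_sum]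
  -- bound the two sums
  have hsum1 : ∑ l ∈ Finset.range (L+1), r ^ l ≤ 4 := by
    refine le_trans (my_geom_sum_le hr0 hr1 _) ?_
    rw [inv_le_comm₀ (by linarith) (by norm_num)]
    linarith
  have hεinv : ε⁻¹ ≤ ε ^ (-2:ℤ) := by
    have h1 : (1:ℝ) ≤ ε⁻¹ := (one_le_inv₀ hε).2 hε1.le
    have : ε ^ (-2:ℤ) = ε⁻¹ * ε⁻¹ := by
      rw [zpow_neg, zpow_two, mul_inv]
    rw [this]
    nlinarith
  have hsum2 : ∑ l ∈ Finset.range (L+1), (2:ℝ) ^ l ≤ 4 * ε ^ (-2:ℤ) := by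
    have hgeom : ∑ l ∈ Finset.range (L+1), (2:ℝ) ^ l = 2 ^ (L+1) - 1 := by
      have := geom_sum_eq (by norm_num : (2:ℝ) ≠ 1) (L+1)
      rw [this]; ring
    have hLle : (L:ℝ) ≤ Real.log ε⁻¹ / Real.log 2 + 1 := by
      have hnn : 0 ≤ Real.log ε⁻¹ / Real.log 2 := by
        apply div_nonneg
        · exact Real.log_nonneg ((one_le_inv₀ hε).2 hε1.le)
        · exact Real.log_nonneg (by norm_num)
      exact (Nat.ceil_lt_add_one hnn).le
    have h2L : (2:ℝ) ^ (L+1) ≤ 4 * ε⁻¹ := by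
      have : ((2:ℝ) ^ (L+1) : ℝ) = (2:ℝ) ^ ((L:ℝ) + 1) := by
        rw [← Real.rpow_natCast (2:ℝ) (L+1)]
        push_cast ; ring_nf
      rw [this]
      have hmono : (2:ℝ) ^ ((L:ℝ) + 1) ≤ (2:ℝ) ^ (Real.log ε⁻¹ / Real.log 2 + 2) := by
        apply Real.rpow_le_rpow_of_exponent_le (by norm_num)
        linarith
      refine hmono.trans ?_
      rw [Real.rpow_add two_pos]
      have hlogb : (2:ℝ) ^ (Real.log ε⁻¹ / Real.log 2) = ε⁻¹ := by
        have : Real.log ε⁻¹ / Real.log 2 = Real.logb 2 ε⁻¹ := rfl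
        rw [this, Real.rpow_logb two_pos (by norm_num) (by positivity)]
      rw [hlogb]
      have : (2:ℝ) ^ (2:ℝ) = 4 := by
        rw [show (2:ℝ) = ((2:ℕ):ℝ) from by norm_num, Real.rpow_natCast]
        norm_num
      rw [this]; linarith
    calc ∑ l ∈ Finset.range (L+1), (2:ℝ) ^ l = 2 ^ (L+1) - 1 := hgeom
      _ ≤ 4 * ε⁻¹ := by linarith
      _ ≤ 4 * ε ^ (-2:ℤ) := by linarith
  have hA : cm * ε ^ (-2:ℤ) * (∑ l ∈ Finset.range (L+1), r ^ l)
      ≤ cm * ε ^ (-2:ℤ) * 4 :=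
    mul_le_mul_of_nonneg_left hsum1 (by positivity)
  have hB : cm * (∑ l ∈ Finset.range (L+1), (2:ℝ) ^ l) ≤ cm * (4 * ε ^ (-2:ℤ)) :=
    mul_le_mul_of_nonneg_left hsum2 hcm.le
  nlinarith [hA, hB]
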